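/- Let G be a finite simple bipartite graph with nonempty partite sets U and W. Let d̄_U and d̄_W be the average degrees of the vertices in U and in W respectively, and let Δ_U and Δ_W be the maximum degrees of vertices in U and in W respectively. Then √(d̄_U·d̄_W) ≤ M(G) ≤ √(Δ_U·Δ_W). -/
import Mathlib


-- `lamMax G`: the largest eigenvalue of the adjacency matrix of `G`.
open Classical in
noncomputable def lamMax {V : Type*} [Fintype V] (G : SimpleGraph V) : ℝ :=
  sSup (spectrum ℝ (G.adjMatrix ℝ))

-- `eXY G X Y = e(X,Y)`: the number of ordered pairs `(x,y) ∈ X × Y` with `x` adjacent to `y`.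
open Classical in
noncomputable def eXY {V : Type*} (G : SimpleGraph V) (X Y : Finset V) : ℕ :=
  ((X ×ˢ Y).filter fun p => G.Adj p.1 p.2).card

/-- `M(G)`: the maximum of `e(X,Y)/√(|X||Y|)` over nonempty `X, Y ⊆ V`. -/
noncomputable def MG {V : Type*} (G : SimpleGraph V) : ℝ :=
  sSup {r : ℝ | ∃ X Y : Finset V, X.Nonempty ∧ Y.Nonempty ∧
    r = (eXY G X Y : ℝ) / Real.sqrt ((X.card : ℝ) * (Y.card : ℝ))}

lemma eXY_eq_sum {V : Type*} (G : SimpleGraph V) [DecidableRel G.Adj] (X Y : Finset V) :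
    (eXY G X Y : ℝ) = ∑ x ∈ X, ∑ y ∈ Y, (if G.Adj x y then (1:ℝ) else 0) := by
  classical
  unfold eXY
  rw [Finset.card_filter, Finset.sum_product]
  push_cast
  apply Finset.sum_congr rfl
  intro x _
  apply Finset.sum_congr rfl
  intro y _
  split_ifs <;> simp_all

lemma sqrt_cauchy {a b c d : ℝ} (ha : 0 ≤ a) (hb : 0 ≤ b) (hc : 0 ≤ c) (hd : 0 ≤ d) :
    Real.sqrt (a*b) + Real.sqrt (c*d) ≤ Real.sqrt ((a+c)*(b+d)) := by
  refine Real.le_sqrt_of_sq_le ?_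
  have h1 : Real.sqrt (a*b) * Real.sqrt (c*d) = Real.sqrt (a*d) * Real.sqrt (c*b) := by
    rw [← Real.sqrt_mul (by positivity), ← Real.sqrt_mul (by positivity)]
    ring_nf
  nlinarith [sq_nonneg (Real.sqrt (a*d) - Real.sqrt (c*b)),
    Real.sq_sqrt (mul_nonneg ha hd), Real.sq_sqrt (mul_nonneg hc hb),
    Real.sq_sqrt (mul_nonneg ha hb), Real.sq_sqrt (mul_nonneg hc hd),
    Real.sqrt_nonneg (a*b), Real.sqrt_nonneg (c*d)]

lemma le_sqrt_of_le_of_le {x p q : ℝ} (hx : 0 ≤ x) (hp : x ≤ p) (hq : x ≤ q) :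
    x ≤ Real.sqrt (p*q) := by
  refine Real.le_sqrt_of_sq_le ?_
  nlinarith

section MainAux
set_option linter.unusedSectionVars false
variable {V : Type*} [Fintype V] (G : SimpleGraph V) [DecidableRel G.Adj]

lemma eXY_symm (X Y : Finset V) : (eXY G X Y : ℝ) = (eXY G Y X : ℝ) := by
  rw [eXY_eq_sum, eXY_eq_sum, Finset.sum_comm]
  exact Finset.sum_congr rfl fun y _ => Finset.sum_congr rfl fun x _ =>
    if_congr (G.adj_comm x y) rfl rfl

/-- inner sum over a subset is at most the degree -/
lemma inner_le_degree (x : V) (s : Finset V) :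
    ∑ y ∈ s, (if G.Adj x y then (1:ℝ) else 0) ≤ (G.degree x : ℝ) := by
  rw [Finset.sum_boole]
  have : (s.filter (G.Adj x)).card ≤ G.degree x := by
    rw [← SimpleGraph.card_neighborFinset_eq_degree]
    apply Finset.card_le_card
    intro y hy
    rw [SimpleGraph.mem_neighborFinset]
    exact (Finset.mem_filter.mp hy).2
  exact_mod_cast this

/-- the main estimate: `e(X,Y) ≤ √(Δ_U Δ_W) √(|X||Y|)` -/
lemma eXY_le (U W : Finset V) (hU : U.Nonempty) (hW : W.Nonempty)
    (hdisj : Disjoint U W) (hcover : ∀ v : V, v ∈ U ∨ v ∈ W)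
    (hbip : ∀ a b, G.Adj a b → (a ∈ U ∧ b ∈ W) ∨ (a ∈ W ∧ b ∈ U))
    (X Y : Finset V) :
    (eXY G X Y : ℝ) ≤ Real.sqrt ((U.sup' hU fun u => (G.degree u : ℝ)) *
        (W.sup' hW fun w => (G.degree w : ℝ))) *
      Real.sqrt ((X.card : ℝ) * (Y.card : ℝ)) := by
  classical
  set DU := U.sup' hU fun u => (G.degree u : ℝ) with hDU
  set DW := W.sup' hW fun w => (G.degree w : ℝ) with hDW
  have hDU0 : 0 ≤ DU := by
    obtain ⟨u, hu⟩ := hU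
    rw [hDU]
    exact le_trans (Nat.cast_nonneg _) (Finset.le_sup' (fun u => (G.degree u : ℝ)) hu)
  have hDW0 : 0 ≤ DW := by
    obtain ⟨w, hw⟩ := hW
    rw [hDW]
    exact le_trans (Nat.cast_nonneg _) (Finset.le_sup' (fun w => (G.degree w : ℝ)) hw)
  have hnotU : ∀ {v : V}, v ∉ U → v ∈ W := fun hv => (hcover _).resolve_left hv
  have hnotW : ∀ {v : V}, v ∈ U → v ∉ W := fun hv => Finset.disjoint_left.mp hdisj hv
  -- split any sum over a finset into U-part and W-part
  have hsplit : ∀ (Z : Finset V) (f : V → ℝ),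
      ∑ x ∈ Z, f x = ∑ x ∈ Z ∩ U, f x + ∑ x ∈ Z ∩ W, f x := by
    intro Z f
    have h1 : Z ∩ W = Z \ U := by
      ext a
      simp only [Finset.mem_inter, Finset.mem_sdiff]
      exact ⟨fun ⟨h1, h2⟩ => ⟨h1, fun hu => hnotW hu h2⟩, fun ⟨h1, h2⟩ => ⟨h1, hnotU h2⟩⟩
    rw [h1, Finset.sum_inter_add_sum_sdiff]
  set a : ℝ := ((X ∩ U).card : ℝ)
  set b : ℝ := ((Y ∩ W).card : ℝ)
  set c : ℝ := ((X ∩ W).card : ℝ)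
  set d : ℝ := ((Y ∩ U).card : ℝ)
  set S1 : ℝ := ∑ x ∈ X ∩ U, ∑ y ∈ Y ∩ W, (if G.Adj x y then (1:ℝ) else 0) with hS1
  set S2 : ℝ := ∑ x ∈ X ∩ W, ∑ y ∈ Y ∩ U, (if G.Adj x y then (1:ℝ) else 0) with hS2
  have hkey : (eXY G X Y : ℝ) = S1 + S2 := by
    rw [eXY_eq_sum, hsplit X]
    congr 1
    · refine Finset.sum_congr rfl fun x hx => ?_
      have hxU : x ∈ U := (Finset.mem_inter.mp hx).2
      refine (Finset.sum_subset Finset.inter_subset_left fun y hy hy' => ?_).symm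
      rw [if_neg]
      intro hadj
      rcases hbip x y hadj with ⟨_, hyW⟩ | ⟨hxW, _⟩
      · exact hy' (Finset.mem_inter.mpr ⟨hy, hyW⟩)
      · exact hnotW hxU hxW
    · refine Finset.sum_congr rfl fun x hx => ?_
      have hxW : x ∈ W := (Finset.mem_inter.mp hx).2
      refine (Finset.sum_subset Finset.inter_subset_left fun y hy hy' => ?_).symm
      rw [if_neg]
      intro hadj
      rcases hbip x y hadj with ⟨hxU, _⟩ | ⟨_, hyU⟩
      · exact hnotW hxU hxW
      · exact hy' (Finset.mem_inter.mpr ⟨hy, hyU⟩)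
  have hS1nn : 0 ≤ S1 :=
    Finset.sum_nonneg fun x _ => Finset.sum_nonneg fun y _ => by positivity
  have hS2nn : 0 ≤ S2 :=
    Finset.sum_nonneg fun x _ => Finset.sum_nonneg fun y _ => by positivity
  have hS1a : S1 ≤ DU * a := by
    calc S1 ≤ ∑ x ∈ X ∩ U, DU := by
          refine Finset.sum_le_sum fun x hx => ?_
          refine le_trans (inner_le_degree G x _) ?_
          rw [hDU]
          exact Finset.le_sup' (fun u => (G.degree u : ℝ)) (Finset.mem_inter.mp hx).2
      _ = DU * a := by rw [Finset.sum_const, nsmul_eq_mul]; ring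
  have hS1b : S1 ≤ DW * b := by
    rw [hS1, Finset.sum_comm]
    calc (∑ y ∈ Y ∩ W, ∑ x ∈ X ∩ U, if G.Adj x y then (1:ℝ) else 0)
        ≤ ∑ y ∈ Y ∩ W, DW := by
          refine Finset.sum_le_sum fun y hy => ?_
          have : (∑ x ∈ X ∩ U, if G.Adj x y then (1:ℝ) else 0)
              = ∑ x ∈ X ∩ U, if G.Adj y x then (1:ℝ) else 0 := by
            exact Finset.sum_congr rfl fun x _ => if_congr (G.adj_comm x y) rfl rfl
          rw [this]
          refine le_trans (inner_le_degree G y _) ?_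
          rw [hDW]
          exact Finset.le_sup' (fun w => (G.degree w : ℝ)) (Finset.mem_inter.mp hy).2
      _ = DW * b := by rw [Finset.sum_const, nsmul_eq_mul]; ring
  have hS2c : S2 ≤ DW * c := by
    calc S2 ≤ ∑ x ∈ X ∩ W, DW := by
          refine Finset.sum_le_sum fun x hx => ?_
          refine le_trans (inner_le_degree G x _) ?_
          rw [hDW]
          exact Finset.le_sup' (fun w => (G.degree w : ℝ)) (Finset.mem_inter.mp hx).2
      _ = DW * c := by rw [Finset.sum_const, nsmul_eq_mul]; ring
  have hS2d : S2 ≤ DU * d := by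
    rw [hS2, Finset.sum_comm]
    calc (∑ y ∈ Y ∩ U, ∑ x ∈ X ∩ W, if G.Adj x y then (1:ℝ) else 0)
        ≤ ∑ y ∈ Y ∩ U, DU := by
          refine Finset.sum_le_sum fun y hy => ?_
          have : (∑ x ∈ X ∩ W, if G.Adj x y then (1:ℝ) else 0)
              = ∑ x ∈ X ∩ W, if G.Adj y x then (1:ℝ) else 0 := by
            exact Finset.sum_congr rfl fun x _ => if_congr (G.adj_comm x y) rfl rfl
          rw [this]
          refine le_trans (inner_le_degree G y _) ?_
          rw [hDU]
          exact Finset.le_sup' (fun u => (G.degree u : ℝ)) (Finset.mem_inter.mp hy).2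
      _ = DU * d := by rw [Finset.sum_const, nsmul_eq_mul]; ring
  have ha0 : (0:ℝ) ≤ a := Nat.cast_nonneg _
  have hb0 : (0:ℝ) ≤ b := Nat.cast_nonneg _
  have hc0 : (0:ℝ) ≤ c := Nat.cast_nonneg _
  have hd0 : (0:ℝ) ≤ d := Nat.cast_nonneg _
  have h1 : S1 ≤ Real.sqrt (DU * DW) * Real.sqrt (a * b) := by
    calc S1 ≤ Real.sqrt (DU * a * (DW * b)) := le_sqrt_of_le_of_le hS1nn hS1a hS1b
      _ = Real.sqrt ((DU * DW) * (a * b)) := by ring_nf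
      _ = Real.sqrt (DU * DW) * Real.sqrt (a * b) := Real.sqrt_mul (by positivity) _
  have h2 : S2 ≤ Real.sqrt (DU * DW) * Real.sqrt (c * d) := by
    calc S2 ≤ Real.sqrt (DW * c * (DU * d)) := le_sqrt_of_le_of_le hS2nn hS2c hS2d
      _ = Real.sqrt ((DU * DW) * (c * d)) := by ring_nf
      _ = Real.sqrt (DU * DW) * Real.sqrt (c * d) := Real.sqrt_mul (by positivity) _
  have hX : (X.card : ℝ) = a + c := by simpa using hsplit X (fun _ => (1:ℝ))
  have hY : (Y.card : ℝ) = b + d := by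
    have h' : ((Y ∩ U).card : ℝ) + ((Y ∩ W).card : ℝ) = (Y.card : ℝ) := by
      simpa using (hsplit Y (fun _ => (1:ℝ))).symm
    linarith
  calc (eXY G X Y : ℝ) = S1 + S2 := hkey
    _ ≤ Real.sqrt (DU * DW) * Real.sqrt (a * b) + Real.sqrt (DU * DW) * Real.sqrt (c * d) := by
        linarith
    _ = Real.sqrt (DU * DW) * (Real.sqrt (a * b) + Real.sqrt (c * d)) := by ring
    _ ≤ Real.sqrt (DU * DW) * Real.sqrt ((a + c) * (b + d)) := by
        have := sqrt_cauchy ha0 hb0 hc0 hd0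
        have h0 : 0 ≤ Real.sqrt (DU * DW) := Real.sqrt_nonneg _
        nlinarith
    _ = Real.sqrt (DU * DW) * Real.sqrt ((X.card : ℝ) * (Y.card : ℝ)) := by
        rw [hX, hY]

end MainAux

/-- For a bipartite graph with partite sets `U`, `W`:
`√(d̄_U·d̄_W) ≤ M(G) ≤ √(Δ_U·Δ_W)`. -/
theorem statement7 {V : Type*} [Fintype V] (G : SimpleGraph V) [DecidableRel G.Adj]
    (U W : Finset V) (hU : U.Nonempty) (hW : W.Nonempty)
    (hdisj : Disjoint U W) (hcover : ∀ v : V, v ∈ U ∨ v ∈ W)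
    (hbip : ∀ a b, G.Adj a b → (a ∈ U ∧ b ∈ W) ∨ (a ∈ W ∧ b ∈ U)) :
    Real.sqrt (((∑ u ∈ U, (G.degree u : ℝ)) / (U.card : ℝ)) *
        ((∑ w ∈ W, (G.degree w : ℝ)) / (W.card : ℝ))) ≤ MG G ∧
      MG G ≤ Real.sqrt ((U.sup' hU fun u => (G.degree u : ℝ)) *
        (W.sup' hW fun w => (G.degree w : ℝ))) := by
  classical
  set B : ℝ := Real.sqrt ((U.sup' hU fun u => (G.degree u : ℝ)) *
      (W.sup' hW fun w => (G.degree w : ℝ))) with hB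
  set S : Set ℝ := {r : ℝ | ∃ X Y : Finset V, X.Nonempty ∧ Y.Nonempty ∧
    r = (eXY G X Y : ℝ) / Real.sqrt ((X.card : ℝ) * (Y.card : ℝ))} with hS
  have hMG : MG G = sSup S := rfl
  have hmem : (eXY G U W : ℝ) / Real.sqrt ((U.card : ℝ) * (W.card : ℝ)) ∈ S :=
    ⟨U, W, hU, hW, rfl⟩
  have hub : ∀ r ∈ S, r ≤ B := by
    rintro r ⟨X, Y, hX, hY, rfl⟩
    have hXc : (0:ℝ) < X.card := by exact_mod_cast hX.card_pos
    have hYc : (0:ℝ) < Y.card := by exact_mod_cast hY.card_pos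
    have hpos : 0 < Real.sqrt ((X.card : ℝ) * (Y.card : ℝ)) := by positivity
    rw [div_le_iff₀ hpos, hB]
    exact eXY_le G U W hU hW hdisj hcover hbip X Y
  have hbdd : BddAbove S := ⟨B, hub⟩
  constructor
  · -- lower bound
    have he1 : (eXY G U W : ℝ) = ∑ u ∈ U, (G.degree u : ℝ) := by
      rw [eXY_eq_sum]
      refine Finset.sum_congr rfl fun u hu => ?_
      have hnb : W.filter (G.Adj u) = G.neighborFinset u := by
        ext y
        simp only [Finset.mem_filter, SimpleGraph.mem_neighborFinset]
        refine ⟨fun h => h.2, fun h => ⟨?_, h⟩⟩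
        rcases hbip u y h with ⟨_, hy⟩ | ⟨huW, _⟩
        · exact hy
        · exact absurd huW (Finset.disjoint_left.mp hdisj hu)
      rw [Finset.sum_boole, hnb, SimpleGraph.card_neighborFinset_eq_degree]
    have he2 : (eXY G U W : ℝ) = ∑ w ∈ W, (G.degree w : ℝ) := by
      rw [eXY_symm, eXY_eq_sum]
      refine Finset.sum_congr rfl fun w hw => ?_
      have hnb : U.filter (G.Adj w) = G.neighborFinset w := by
        ext y
        simp only [Finset.mem_filter, SimpleGraph.mem_neighborFinset]
        refine ⟨fun h => h.2, fun h => ⟨?_, h⟩⟩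
        rcases hbip w y h with ⟨hwU, _⟩ | ⟨_, hyU⟩
        · exact absurd hw (Finset.disjoint_left.mp hdisj hwU)
        · exact hyU
      rw [Finset.sum_boole, hnb, SimpleGraph.card_neighborFinset_eq_degree]
    have hUc : (0:ℝ) < U.card := by exact_mod_cast hU.card_pos
    have hWc : (0:ℝ) < W.card := by exact_mod_cast hW.card_pos
    have he0 : (0:ℝ) ≤ (eXY G U W : ℝ) := Nat.cast_nonneg _
    have heq : ((∑ u ∈ U, (G.degree u : ℝ)) / (U.card : ℝ)) *
        ((∑ w ∈ W, (G.degree w : ℝ)) / (W.card : ℝ)) =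
        ((eXY G U W : ℝ) / Real.sqrt ((U.card : ℝ) * (W.card : ℝ)))^2 := by
      rw [← he1, ← he2, div_pow, Real.sq_sqrt (by positivity)]
      ring
    rw [heq, Real.sqrt_sq (by positivity), hMG]
    exact le_csSup hbdd hmem
  · rw [hMG, hB]
    exact csSup_le ⟨_, hmem⟩ hub
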